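/- arXiv:2604.22320 — 3 statements merged into one kernel-verified Lean document; each statement's English description precedes it below -/
import Mathlib

section
/- The functions A_{k,m}(h) = ∏_{j=k}^{m} (1 + h²/j)⁻¹, for k = 1, …, m, are linearly independent as functions on [0,∞): if Σ_{k=1}^m w_k A_{k,m}(h) = 0 for all h ≥ 0 with real coefficients w_k, then w_1 = w_2 = ⋯ = w_m = 0. -/
theorem basis_linear_independent
    (m : ℕ) (hm : 1 ≤ m) (w : ℕ → ℝ)
    (hzero : ∀ h : ℝ, 0 ≤ h →
      ∑ k ∈ Finset.Icc 1 m, w k * ∏ j ∈ Finset.Icc k m, (1 + h ^ 2 / (j : ℝ))⁻¹ = 0) :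
    ∀ k ∈ Finset.Icc 1 m, w k = 0 := by
  set Q : Polynomial ℝ := ∑ k ∈ Finset.Icc 1 m,
      Polynomial.C (w k) * ∏ j ∈ Finset.Icc 1 (k-1),
        (Polynomial.C ((j:ℝ)⁻¹) * Polynomial.X + 1) with hQdef
  have hevalQ : ∀ x : ℝ, Q.eval x
      = ∑ k ∈ Finset.Icc 1 m, w k * ∏ j ∈ Finset.Icc 1 (k-1), ((j:ℝ)⁻¹ * x + 1) := by
    intro x
    simp [hQdef, Polynomial.eval_finset_sum, Polynomial.eval_prod]
  -- Q vanishes on [0, ∞)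
  have hroot : ∀ x : ℝ, 0 ≤ x → Q.eval x = 0 := by
    intro x hx
    have hsqrt : (Real.sqrt x) ^ 2 = x := Real.sq_sqrt hx
    have h0 := hzero (Real.sqrt x) (Real.sqrt_nonneg x)
    rw [hsqrt] at h0
    rw [hevalQ]
    have key : ∀ k ∈ Finset.Icc 1 m,
        (∏ j ∈ Finset.Icc 1 (k-1), ((j:ℝ)⁻¹ * x + 1))
          = (∏ j ∈ Finset.Icc 1 m, (1 + x / (j:ℝ)))
            * ∏ j ∈ Finset.Icc k m, (1 + x / (j:ℝ))⁻¹ := by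
      intro k hk
      rw [Finset.mem_Icc] at hk
      obtain ⟨hk1, hkm⟩ := hk
      have hsplit : (∏ j ∈ Finset.Icc 1 (k-1), (1 + x / (j:ℝ)))
          * ∏ j ∈ Finset.Icc k m, (1 + x / (j:ℝ))
          = ∏ j ∈ Finset.Icc 1 m, (1 + x / (j:ℝ)) := by
        have e1 : Finset.Icc 1 (k-1) = Finset.Ioc 0 (k-1) := by
          rw [← Finset.Icc_add_one_left_eq_Ioc, zero_add]
        have e2 : Finset.Icc k m = Finset.Ioc (k-1) m := by
          have hkk : k = (k-1)+1 := by omega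
          rw [hkk, Finset.Icc_add_one_left_eq_Ioc, Nat.add_sub_cancel]
        have e3 : Finset.Icc 1 m = Finset.Ioc 0 m := by
          rw [← Finset.Icc_add_one_left_eq_Ioc, zero_add]
        rw [e1, e2, e3]
        exact Finset.prod_Ioc_consecutive _ (Nat.zero_le _)
          (le_trans (Nat.pred_le k) hkm)
      have hne : ∀ j ∈ Finset.Icc k m, (1 + x / (j:ℝ)) ≠ 0 := by
        intro j hj
        rw [Finset.mem_Icc] at hj
        have hj1 : 1 ≤ j := le_trans hk1 hj.1
        have : (0:ℝ) < 1 + x / j := by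
          have : (0:ℝ) ≤ x / j := div_nonneg hx (by positivity)
          linarith
        exact ne_of_gt this
      have hform : ∀ j : ℕ, ((j:ℝ)⁻¹ * x + 1) = 1 + x / (j:ℝ) := by
        intro j; rw [div_eq_mul_inv]; ring
      calc (∏ j ∈ Finset.Icc 1 (k-1), ((j:ℝ)⁻¹ * x + 1))
          = ∏ j ∈ Finset.Icc 1 (k-1), (1 + x / (j:ℝ)) := by
            exact Finset.prod_congr rfl (fun j _ => hform j)
        _ = (∏ j ∈ Finset.Icc 1 m, (1 + x / (j:ℝ)))
            * ∏ j ∈ Finset.Icc k m, (1 + x / (j:ℝ))⁻¹ := by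
            rw [Finset.prod_inv_distrib, ← hsplit,
              mul_assoc, mul_inv_cancel₀ (Finset.prod_ne_zero_iff.mpr hne), mul_one]
    calc ∑ k ∈ Finset.Icc 1 m, w k * ∏ j ∈ Finset.Icc 1 (k-1), ((j:ℝ)⁻¹ * x + 1)
        = ∑ k ∈ Finset.Icc 1 m, (∏ j ∈ Finset.Icc 1 m, (1 + x / (j:ℝ)))
            * (w k * ∏ j ∈ Finset.Icc k m, (1 + x / (j:ℝ))⁻¹) := by
          refine Finset.sum_congr rfl fun k hk => ?_
          rw [key k hk]; ring
      _ = (∏ j ∈ Finset.Icc 1 m, (1 + x / (j:ℝ)))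
            * ∑ k ∈ Finset.Icc 1 m, w k * ∏ j ∈ Finset.Icc k m, (1 + x / (j:ℝ))⁻¹ := by
          rw [Finset.mul_sum]
      _ = 0 := by rw [h0, mul_zero]
  -- hence Q = 0
  have hQ0 : Q = 0 := by
    apply Polynomial.eq_zero_of_infinite_isRoot
    exact (Set.Ici_infinite (0:ℝ)).mono (fun x hx => hroot x hx)
  -- now strong induction
  intro k hk
  induction k using Nat.strong_induction_on with
  | _ k ih =>
    rw [Finset.mem_Icc] at hk
    obtain ⟨hk1, hkm⟩ := hk
    have he : Q.eval (-(k:ℝ)) = 0 := by rw [hQ0]; simp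
    rw [hevalQ] at he
    have hsingle : ∑ k' ∈ Finset.Icc 1 m,
        w k' * ∏ j ∈ Finset.Icc 1 (k'-1), ((j:ℝ)⁻¹ * (-(k:ℝ)) + 1)
        = w k * ∏ j ∈ Finset.Icc 1 (k-1), ((j:ℝ)⁻¹ * (-(k:ℝ)) + 1) := by
      apply Finset.sum_eq_single_of_mem k (Finset.mem_Icc.mpr ⟨hk1, hkm⟩)
      intro k' hk' hne
      rw [Finset.mem_Icc] at hk'
      rcases lt_or_gt_of_ne hne with hlt | hgt
      · rw [ih k' hlt (Finset.mem_Icc.mpr hk'), zero_mul]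
      · -- k < k', so k ∈ Icc 1 (k'-1) and the factor vanishes
        have hmem : k ∈ Finset.Icc 1 (k'-1) :=
          Finset.mem_Icc.mpr ⟨hk1, by omega⟩
        have hfac : ((k:ℝ)⁻¹ * (-(k:ℝ)) + 1) = 0 := by
          have hk0 : (k:ℝ) ≠ 0 := by positivity
          field_simp; norm_num
        rw [Finset.prod_eq_zero hmem hfac, mul_zero]
    rw [hsingle] at he
    have hprod : (∏ j ∈ Finset.Icc 1 (k-1), ((j:ℝ)⁻¹ * (-(k:ℝ)) + 1)) ≠ 0 := by
      apply Finset.prod_ne_zero_iff.mpr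
      intro j hj
      rw [Finset.mem_Icc] at hj
      have hj1 : 1 ≤ j := hj.1
      have hjk : j < k := by omega
      have hj0 : (0:ℝ) < j := by exact_mod_cast hj1
      have : (j:ℝ)⁻¹ * (-(k:ℝ)) + 1 = ((j:ℝ) - k) / j := by field_simp; ring
      rw [this]
      apply div_ne_zero _ (ne_of_gt hj0)
      have : (j:ℝ) < k := by exact_mod_cast hjk
      linarith
    exact (mul_eq_zero.mp he).resolve_right hprod
end

section
/- Define 𝒜_m as the set of functions of the form C_m(h) = Σ_{k=1}^m w_k A_{k,m}(h) with w_k ≥ 0, where A_{k,m}(h) = ∏_{j=k}^{m}(1 + h²/j)⁻¹. Then 𝒜_m ⊆ 𝒜_{m+1}; i.e., every function in 𝒜_m can be written as Σ_{k=1}^{m+1} c_k A_{k,m+1}(h) with nonnegative coefficients c_k. -/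
lemma key_split (m k : ℕ) (hk1 : 1 ≤ k) (hk2 : k ≤ m) (h : ℝ) :
    (∏ j ∈ Finset.Icc k m, (1 + h ^ 2 / (j : ℝ))⁻¹)
      = (((m : ℝ) + 1 - k) / ((m : ℝ) + 1)) * ∏ j ∈ Finset.Icc k (m+1), (1 + h ^ 2 / (j : ℝ))⁻¹
        + ((k : ℝ) / ((m : ℝ) + 1)) * ∏ j ∈ Finset.Icc (k+1) (m+1), (1 + h ^ 2 / (j : ℝ))⁻¹ := by
  have hpos : ∀ j : ℕ, (0:ℝ) < 1 + h ^ 2 / (j : ℝ) := by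
    intro j
    have : (0:ℝ) ≤ h ^ 2 / (j : ℝ) := by positivity
    linarith
  have htop : (∏ j ∈ Finset.Icc k (m+1), (1 + h ^ 2 / (j : ℝ))⁻¹)
      = (∏ j ∈ Finset.Icc k m, (1 + h ^ 2 / (j : ℝ))⁻¹) * (1 + h ^ 2 / ((m:ℝ)+1))⁻¹ := by
    rw [Finset.prod_Icc_succ_top (by omega : k ≤ m + 1)]
    push_cast
    ring
  have hins : Finset.Icc k (m+1) = insert k (Finset.Icc (k+1) (m+1)) := by
    ext x; simp [Finset.mem_Icc, Finset.mem_insert]; omega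
  have hbot : (∏ j ∈ Finset.Icc k (m+1), (1 + h ^ 2 / (j : ℝ))⁻¹)
      = (1 + h ^ 2 / (k : ℝ))⁻¹ * ∏ j ∈ Finset.Icc (k+1) (m+1), (1 + h ^ 2 / (j : ℝ))⁻¹ := by
    rw [hins, Finset.prod_insert (by simp [Finset.mem_Icc])]
  set T := ∏ j ∈ Finset.Icc k (m+1), (1 + h ^ 2 / (j : ℝ))⁻¹ with hT
  have hk0 : (0:ℝ) < (k:ℝ) := by exact_mod_cast hk1
  have hm0 : (0:ℝ) < (m:ℝ) + 1 := by positivity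
  have hkk : (1 + h ^ 2 / (k : ℝ)) ≠ 0 := ne_of_gt (hpos k)
  have hmm : (1 + h ^ 2 / ((m:ℝ)+1)) ≠ 0 := by
    have := hpos (m+1); push_cast at this; linarith
  -- express prods in terms of T
  have h1 : (∏ j ∈ Finset.Icc k m, (1 + h ^ 2 / (j : ℝ))⁻¹) = T * (1 + h ^ 2 / ((m:ℝ)+1)) := by
    rw [htop]; field_simp
  have h2 : (∏ j ∈ Finset.Icc (k+1) (m+1), (1 + h ^ 2 / (j : ℝ))⁻¹) = T * (1 + h ^ 2 / (k:ℝ)) := by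
    rw [hbot]; field_simp
  rw [h1, h2]
  field_simp
  ring

theorem sieve_spaces_nested
    (m : ℕ) (hm : 1 ≤ m) (w : ℕ → ℝ) (hw : ∀ k, 0 ≤ w k) :
    ∃ c : ℕ → ℝ, (∀ k, 0 ≤ c k) ∧
      ∀ h : ℝ, 0 ≤ h →
        ∑ k ∈ Finset.Icc 1 m, w k * ∏ j ∈ Finset.Icc k m, (1 + h ^ 2 / (j : ℝ))⁻¹
          = ∑ k ∈ Finset.Icc 1 (m + 1), c k * ∏ j ∈ Finset.Icc k (m + 1), (1 + h ^ 2 / (j : ℝ))⁻¹ := by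
  refine ⟨fun k => (if k ≤ m then (((m:ℝ)+1-(k:ℝ))/((m:ℝ)+1)) * w k else 0)
      + (if 2 ≤ k then (((k:ℝ)-1)/((m:ℝ)+1)) * w (k-1) else 0), ?_, ?_⟩
  · intro k
    have hm0 : (0:ℝ) < (m:ℝ) + 1 := by positivity
    apply add_nonneg
    · split_ifs with hk
      · apply mul_nonneg (div_nonneg _ (le_of_lt hm0)) (hw k)
        have : (k:ℝ) ≤ (m:ℝ) := by exact_mod_cast hk
        linarith
      · exact le_refl 0
    · split_ifs with hk
      · apply mul_nonneg (div_nonneg _ (le_of_lt hm0)) (hw _)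
        have : (2:ℝ) ≤ (k:ℝ) := by exact_mod_cast hk
        linarith
      · exact le_refl 0
  · intro h _
    set Q : ℕ → ℝ := fun k => ∏ j ∈ Finset.Icc k (m+1), (1 + h ^ 2 / (j : ℝ))⁻¹ with hQ
    have LHSeq : ∑ k ∈ Finset.Icc 1 m, w k * ∏ j ∈ Finset.Icc k m, (1 + h ^ 2 / (j : ℝ))⁻¹
        = (∑ k ∈ Finset.Icc 1 m, (((m:ℝ)+1-(k:ℝ))/((m:ℝ)+1)) * w k * Q k)
          + ∑ k ∈ Finset.Icc 1 m, ((k:ℝ)/((m:ℝ)+1)) * w k * Q (k+1) := by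
      rw [← Finset.sum_add_distrib]
      apply Finset.sum_congr rfl
      intro k hk
      rw [Finset.mem_Icc] at hk
      rw [key_split m k hk.1 hk.2 h, hQ]
      ring
    rw [LHSeq]
    have hsplitTop : ∀ f : ℕ → ℝ, ∑ k ∈ Finset.Icc 1 (m+1), (if k ≤ m then f k else 0)
        = ∑ k ∈ Finset.Icc 1 m, f k := by
      intro f
      rw [Finset.sum_Icc_succ_top (by omega : 1 ≤ m + 1)]
      rw [if_neg (by omega : ¬ m + 1 ≤ m), add_zero]
      apply Finset.sum_congr rfl
      intro k hk
      rw [Finset.mem_Icc] at hk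
      rw [if_pos hk.2]
    have hins : Finset.Icc 1 (m+1) = insert 1 (Finset.Icc 2 (m+1)) := by
      ext x; simp [Finset.mem_Icc]; omega
    have hmap : Finset.Icc 2 (m+1) = (Finset.Icc 1 m).map (addRightEmbedding 1) := by
      rw [Finset.map_add_right_Icc]
    have hsplitBot : ∀ f : ℕ → ℝ, ∑ k ∈ Finset.Icc 1 (m+1), (if 2 ≤ k then f k else 0)
        = ∑ k ∈ Finset.Icc 1 m, f (k+1) := by
      intro f
      rw [hins, Finset.sum_insert (by simp [Finset.mem_Icc]), if_neg (by omega), hmap,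
        Finset.sum_map, zero_add]
      apply Finset.sum_congr rfl
      intro k hk
      rw [Finset.mem_Icc] at hk
      rw [addRightEmbedding_apply, if_pos (by omega)]
    have RHSeq : ∑ k ∈ Finset.Icc 1 (m+1),
          ((if k ≤ m then (((m:ℝ)+1-(k:ℝ))/((m:ℝ)+1)) * w k else 0)
            + (if 2 ≤ k then (((k:ℝ)-1)/((m:ℝ)+1)) * w (k-1) else 0)) * Q k
        = (∑ k ∈ Finset.Icc 1 m, (((m:ℝ)+1-(k:ℝ))/((m:ℝ)+1)) * w k * Q k)
          + ∑ k ∈ Finset.Icc 1 m, ((k:ℝ)/((m:ℝ)+1)) * w k * Q (k+1) := by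
      have step : ∀ k : ℕ,
          ((if k ≤ m then (((m:ℝ)+1-(k:ℝ))/((m:ℝ)+1)) * w k else 0)
            + (if 2 ≤ k then (((k:ℝ)-1)/((m:ℝ)+1)) * w (k-1) else 0)) * Q k
          = (if k ≤ m then (((m:ℝ)+1-(k:ℝ))/((m:ℝ)+1)) * w k * Q k else 0)
            + (if 2 ≤ k then (((k:ℝ)-1)/((m:ℝ)+1)) * w (k-1) * Q k else 0) := by
        intro k
        split_ifs <;> ring
      rw [Finset.sum_congr rfl (fun k _ => step k), Finset.sum_add_distrib,
        hsplitTop (fun k => (((m:ℝ)+1-(k:ℝ))/((m:ℝ)+1)) * w k * Q k),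
        hsplitBot (fun k => (((k:ℝ)-1)/((m:ℝ)+1)) * w (k-1) * Q k)]
      congr 1
      apply Finset.sum_congr rfl
      intro k _
      push_cast
      ring
    exact RHSeq.symm
end

section
/- Let C = Σ_{k=1}^m w_k A_{k,m} with w_k ≥ 0 and L ≤ Σ_k w_k ≤ U, and let Σ_C be the n×n matrix with entries C(‖s_i − s_j‖). Then every eigenvalue λ of Σ_C satisfies L·λ_min(A_{m,m,n}) ≤ λ ≤ U·λ_max(A_{m,m,n}), where A_{m,m,n} is the matrix with entries (1 + ‖s_i − s_j‖²/m)⁻¹. -/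
open Matrix

open MeasureTheory Set

variable {n d : ℕ}

/-- Gram matrices give nonnegative quadratic forms. -/
lemma gram_qf_nonneg {E : Type*} [NormedAddCommGroup E] [InnerProductSpace ℝ E]
    (v : Fin n → E) (x : Fin n → ℝ) :
    0 ≤ ∑ i, ∑ j, x i * x j * (inner ℝ (v i) (v j)) := by
  have h : ∑ i, ∑ j, x i * x j * (inner ℝ (v i) (v j))
      = inner ℝ (∑ i, x i • v i) (∑ j, x j • v j) := by
    rw [sum_inner]
    refine Finset.sum_congr rfl fun i _ => ?_
    rw [inner_sum]
    refine Finset.sum_congr rfl fun j _ => ?_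
    rw [real_inner_smul_left, real_inner_smul_right]; ring
  rw [h]
  exact real_inner_self_nonneg

lemma pow_inner_qf_nonneg (s : Fin n → EuclideanSpace ℝ (Fin d)) (x : Fin n → ℝ) (N : ℕ) :
    0 ≤ ∑ i, ∑ j, x i * x j * (inner ℝ (s i) (s j)) ^ N := by
  have inner_eq : ∀ (u v : EuclideanSpace ℝ (Fin d)),
      (inner ℝ u v) = ∑ c, u c * v c := by
    intro u v
    simp [PiLp.inner_apply, RCLike.inner_apply, starRingEnd_apply, mul_comm]
  have expand : ∀ (u v : EuclideanSpace ℝ (Fin d)),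
      (inner ℝ u v) ^ N = ∑ g ∈ Fintype.piFinset (fun _ : Fin N => (Finset.univ : Finset (Fin d))),
        (∏ t, u (g t)) * (∏ t, v (g t)) := by
    intro u v
    rw [inner_eq, ← Fin.prod_const N, Finset.prod_univ_sum]
    exact Finset.sum_congr rfl fun g _ => by rw [Finset.prod_mul_distrib]
  calc (0:ℝ) ≤ ∑ g ∈ Fintype.piFinset (fun _ : Fin N => (Finset.univ : Finset (Fin d))),
      (∑ i, x i * ∏ t, s i (g t)) ^ 2 :=
        Finset.sum_nonneg fun g _ => sq_nonneg _
    _ = ∑ i, ∑ j, x i * x j * (inner ℝ (s i) (s j)) ^ N := by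
        simp_rw [sq, Finset.sum_mul_sum, expand, Finset.mul_sum]
        rw [Finset.sum_comm]
        refine Finset.sum_congr rfl fun i _ => ?_
        rw [Finset.sum_comm]
        refine Finset.sum_congr rfl fun j _ => ?_
        refine Finset.sum_congr rfl fun g _ => by ring

lemma exp_inner_qf_nonneg (s : Fin n → EuclideanSpace ℝ (Fin d)) (x : Fin n → ℝ)
    (a : ℝ) (ha : 0 ≤ a) :
    0 ≤ ∑ i, ∑ j, x i * x j * Real.exp (a * (inner ℝ (s i) (s j))) := by
  have hsummable : ∀ (z c : ℝ), Summable (fun N : ℕ => c * (z ^ N / N.factorial)) :=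
    fun z c => (Real.summable_pow_div_factorial z).mul_left c
  have hexp : ∀ z : ℝ, Real.exp z = ∑' N : ℕ, z ^ N / N.factorial := by
    intro z
    rw [Real.exp_eq_exp_ℝ, NormedSpace.exp_eq_tsum_div]
  have step1 : ∀ i, ∑ j, x i * x j * Real.exp (a * (inner ℝ (s i) (s j)))
      = ∑' N : ℕ, ∑ j, x i * x j * ((a * (inner ℝ (s i) (s j))) ^ N / N.factorial) := by
    intro i
    rw [Summable.tsum_finsetSum (fun j _ => hsummable _ _)]
    refine Finset.sum_congr rfl fun j _ => ?_
    rw [hexp, ← tsum_mul_left]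
  have key : ∑ i, ∑ j, x i * x j * Real.exp (a * (inner ℝ (s i) (s j)))
      = ∑' N : ℕ, ∑ i, ∑ j, x i * x j * ((a * (inner ℝ (s i) (s j))) ^ N / N.factorial) := by
    rw [Summable.tsum_finsetSum (fun i _ => (hasSum_sum (fun (j : Fin n) _ => (hsummable (a * (inner ℝ (s i) (s j))) (x i * x j)).hasSum)).summable)]
    exact Finset.sum_congr rfl fun i _ => step1 i
  rw [key]
  refine tsum_nonneg fun N => ?_
  have : ∑ i, ∑ j, x i * x j * ((a * (inner ℝ (s i) (s j))) ^ N / N.factorial)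
      = (a ^ N / N.factorial) * ∑ i, ∑ j, x i * x j * (inner ℝ (s i) (s j)) ^ N := by
    rw [Finset.mul_sum]
    refine Finset.sum_congr rfl fun i _ => ?_
    rw [Finset.mul_sum]
    refine Finset.sum_congr rfl fun j _ => ?_
    rw [mul_pow]; ring
  rw [this]
  exact mul_nonneg (div_nonneg (pow_nonneg ha N) (Nat.cast_nonneg _))
    (pow_inner_qf_nonneg s x N)

lemma gauss_qf_nonneg (s : Fin n → EuclideanSpace ℝ (Fin d)) (x : Fin n → ℝ)
    (a : ℝ) (ha : 0 ≤ a) :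
    0 ≤ ∑ i, ∑ j, x i * x j * Real.exp (-(a * dist (s i) (s j) ^ 2)) := by
  have hdist : ∀ (u v : EuclideanSpace ℝ (Fin d)),
      dist u v ^ 2 = ‖u‖ ^ 2 - 2 * (inner ℝ u v) + ‖v‖ ^ 2 := by
    intro u v
    rw [dist_eq_norm, norm_sub_sq_real]
  have key : ∀ i j, x i * x j * Real.exp (-(a * dist (s i) (s j) ^ 2))
      = (x i * Real.exp (-(a * ‖s i‖ ^ 2))) * (x j * Real.exp (-(a * ‖s j‖ ^ 2)))
        * Real.exp ((2 * a) * (inner ℝ (s i) (s j))) := by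
    intro i j
    have e : Real.exp (-(a * (‖s i‖ ^ 2 - 2 * (inner ℝ (s i) (s j)) + ‖s j‖ ^ 2)))
        = Real.exp (-(a * ‖s i‖ ^ 2)) * Real.exp (-(a * ‖s j‖ ^ 2))
          * Real.exp ((2 * a) * (inner ℝ (s i) (s j))) := by
      rw [← Real.exp_add, ← Real.exp_add]
      ring_nf
    rw [hdist, e]; ring
  calc (0:ℝ) ≤ ∑ i, ∑ j, (x i * Real.exp (-(a * ‖s i‖ ^ 2))) * (x j * Real.exp (-(a * ‖s j‖ ^ 2)))
        * Real.exp ((2 * a) * (inner ℝ (s i) (s j))) :=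
      exp_inner_qf_nonneg s (fun i => x i * Real.exp (-(a * ‖s i‖ ^ 2))) (2 * a)
        (by linarith)
    _ = ∑ i, ∑ j, x i * x j * Real.exp (-(a * dist (s i) (s j) ^ 2)) := by
      refine Finset.sum_congr rfl fun i _ => Finset.sum_congr rfl fun j _ => (key i j).symm

lemma inv_integral_repr {b : ℝ} (hb : 0 < b) :
    b⁻¹ = ∫ t in Ioi (0:ℝ), Real.exp (-(b * t)) := by
  rw [integral_comp_mul_left_Ioi (fun u => Real.exp (-u)) 0 hb, mul_zero,
    integral_exp_neg_Ioi_zero, smul_eq_mul, mul_one]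

lemma inv_kernel_qf_nonneg (s : Fin n → EuclideanSpace ℝ (Fin d)) (x : Fin n → ℝ)
    (c : ℝ) (hc : 0 < c) :
    0 ≤ ∑ i, ∑ j, x i * x j * (1 + dist (s i) (s j) ^ 2 / c)⁻¹ := by
  set b : Fin n → Fin n → ℝ := fun i j => 1 + dist (s i) (s j) ^ 2 / c with hbdef
  have hb : ∀ i j, 0 < b i j := fun i j =>
    add_pos_of_pos_of_nonneg one_pos (div_nonneg (sq_nonneg _) hc.le)
  have hint : ∀ i j : Fin n,
      IntegrableOn (fun t => x i * x j * Real.exp (-(b i j * t))) (Ioi (0:ℝ)) := by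
    intro i j
    simpa [neg_mul, IntegrableOn] using Integrable.const_mul (exp_neg_integrableOn_Ioi 0 (hb i j)) (x i * x j)
  have key : ∑ i, ∑ j, x i * x j * (b i j)⁻¹
      = ∫ t in Ioi (0:ℝ), ∑ i, ∑ j, x i * x j * Real.exp (-(b i j * t)) := by
    rw [integral_finset_sum _ (fun i _ => integrable_finset_sum _ (fun j _ => hint i j))]
    refine Finset.sum_congr rfl fun i _ => ?_
    rw [integral_finset_sum _ (fun j _ => hint i j)]
    refine Finset.sum_congr rfl fun j _ => ?_
    rw [inv_integral_repr (hb i j), ← integral_const_mul]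
  show 0 ≤ ∑ i, ∑ j, x i * x j * (b i j)⁻¹
  rw [key]
  refine setIntegral_nonneg measurableSet_Ioi fun t ht => ?_
  have ht' : (0:ℝ) ≤ t := (le_of_lt (mem_Ioi.mp ht))
  have expand : ∀ i j : Fin n, x i * x j * Real.exp (-(b i j * t))
      = (x i * Real.exp (-t/2)) * (x j * Real.exp (-t/2))
        * Real.exp (-((t / c) * dist (s i) (s j) ^ 2)) := by
    intro i j
    have : Real.exp (-(b i j * t)) = Real.exp (-t/2) * Real.exp (-t/2)
        * Real.exp (-((t / c) * dist (s i) (s j) ^ 2)) := by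
      rw [← Real.exp_add, ← Real.exp_add, hbdef]
      congr 1
      field_simp
      ring
    rw [this]; ring
  calc (0:ℝ) ≤ ∑ i, ∑ j, (x i * Real.exp (-t/2)) * (x j * Real.exp (-t/2))
        * Real.exp (-((t / c) * dist (s i) (s j) ^ 2)) :=
      gauss_qf_nonneg s (fun i => x i * Real.exp (-t/2)) (t / c) (div_nonneg ht' hc.le)
    _ = ∑ i, ∑ j, x i * x j * Real.exp (-(b i j * t)) := by
      refine Finset.sum_congr rfl fun i _ => Finset.sum_congr rfl fun j _ => (expand i j).symm

lemma sum_rotate {α β γ : Type*} [Fintype α] [Fintype β] [Fintype γ]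
    (E : α → β → γ → ℝ) :
    ∑ i, ∑ j, ∑ k, E i j k = ∑ k, ∑ i, ∑ j, E i j k := by
  have h1 : ∑ i, ∑ j, ∑ k, E i j k = ∑ i, ∑ k, ∑ j, E i j k :=
    Finset.sum_congr rfl fun i _ => Finset.sum_comm
  rw [h1]
  exact Finset.sum_comm

lemma real_spectral_entry (A : Matrix (Fin n) (Fin n) ℝ) (hA : A.IsHermitian) (i j : Fin n) :
    A i j = ∑ k, hA.eigenvalues k * (hA.eigenvectorUnitary : Matrix (Fin n) (Fin n) ℝ) i k
      * (hA.eigenvectorUnitary : Matrix (Fin n) (Fin n) ℝ) j k := by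
  conv_lhs => rw [hA.spectral_theorem, Unitary.conjStarAlgAut_apply]
  rw [Matrix.mul_apply]
  refine Finset.sum_congr rfl fun k _ => ?_
  rw [Matrix.mul_diagonal]
  simp [Matrix.star_apply, mul_comm, mul_assoc, mul_left_comm]

lemma real_unitary_orth (A : Matrix (Fin n) (Fin n) ℝ) (hA : A.IsHermitian) (i j : Fin n) :
    ∑ k, (hA.eigenvectorUnitary : Matrix (Fin n) (Fin n) ℝ) i k
      * (hA.eigenvectorUnitary : Matrix (Fin n) (Fin n) ℝ) j k
      = if i = j then (1:ℝ) else 0 := by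
  have h := Matrix.mem_unitaryGroup_iff.mp hA.eigenvectorUnitary.2
  have h2 : ((hA.eigenvectorUnitary : Matrix (Fin n) (Fin n) ℝ) *
      star (hA.eigenvectorUnitary : Matrix (Fin n) (Fin n) ℝ)) i j
      = (1 : Matrix (Fin n) (Fin n) ℝ) i j := by rw [h]
  simpa [Matrix.mul_apply, Matrix.star_apply, Matrix.one_apply] using h2

/-- Real Schur product theorem, quadratic-form version. -/
lemma schur_qf_nonneg (B : Matrix (Fin n) (Fin n) ℝ) (hB : B.PosSemidef)
    (f : Fin n → Fin n → ℝ) (hf : ∀ y : Fin n → ℝ, 0 ≤ ∑ i, ∑ j, y i * y j * f i j)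
    (x : Fin n → ℝ) : 0 ≤ ∑ i, ∑ j, x i * x j * (f i j * B i j) := by
  set V : Matrix (Fin n) (Fin n) ℝ := (hB.1.eigenvectorUnitary : Matrix (Fin n) (Fin n) ℝ)
    with hV
  have key : ∑ i, ∑ j, x i * x j * (f i j * B i j)
      = ∑ k, ∑ i, ∑ j, hB.1.eigenvalues k *
          ((x i * V i k) * (x j * V j k) * f i j) := by
    have e1 : ∀ i j : Fin n, x i * x j * (f i j * B i j)
        = ∑ k, hB.1.eigenvalues k * ((x i * V i k) * (x j * V j k) * f i j) := by
      intro i j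
      rw [real_spectral_entry B hB.1 i j, Finset.mul_sum, Finset.mul_sum]
      exact Finset.sum_congr rfl fun k _ => by ring
    simp_rw [e1]
    exact sum_rotate _
  rw [key]
  refine Finset.sum_nonneg fun k _ => ?_
  have hlam : 0 ≤ hB.1.eigenvalues k := Matrix.PosSemidef.eigenvalues_nonneg hB k
  have h2 : ∑ i, ∑ j, hB.1.eigenvalues k * ((x i * V i k) * (x j * V j k) * f i j)
      = hB.1.eigenvalues k * ∑ i, ∑ j, (x i * V i k) * (x j * V j k) * f i j := by
    rw [Finset.mul_sum]
    exact Finset.sum_congr rfl fun i _ => by rw [Finset.mul_sum]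
  rw [h2]
  exact mul_nonneg hlam (hf (fun i => x i * V i k))

lemma qf_dot (B : Matrix (Fin n) (Fin n) ℝ) (y : Fin n → ℝ) :
    dotProduct (star y) (B *ᵥ y) = ∑ i, ∑ j, y i * y j * B i j := by
  simp only [dotProduct, mulVec, Pi.star_apply, star_trivial, Finset.mul_sum]
  exact Finset.sum_congr rfl fun i _ => Finset.sum_congr rfl fun j _ => by ring

lemma prod_kernel_qf_nonneg (s : Fin n → EuclideanSpace ℝ (Fin d)) (F : Finset ℕ)
    (hF : ∀ k ∈ F, 0 < k) :
    ∀ x : Fin n → ℝ,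
      0 ≤ ∑ i, ∑ j, x i * x j * ∏ k ∈ F, (1 + dist (s i) (s j) ^ 2 / (k:ℝ))⁻¹ := by
  induction F using Finset.induction_on with
  | empty =>
    intro x
    simp only [Finset.prod_empty, mul_one]
    have h : ∑ i, ∑ j, x i * x j = (∑ i, x i) ^ 2 := by
      rw [sq, Finset.sum_mul_sum]
    rw [h]
    exact sq_nonneg _
  | @insert a F ha ih =>
    intro x
    have hF' : ∀ k ∈ F, 0 < k := fun k hk => hF k (Finset.mem_insert_of_mem hk)
    have ha0 : 0 < a := hF a (Finset.mem_insert_self a F)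
    set B : Matrix (Fin n) (Fin n) ℝ :=
      Matrix.of (fun i j => ∏ k ∈ F, (1 + dist (s i) (s j) ^ 2 / (k:ℝ))⁻¹) with hBdef
    have hBH : B.IsHermitian := by
      apply Matrix.IsHermitian.ext
      intro i j
      simp only [hBdef, Matrix.of_apply, star_trivial, dist_comm (s j) (s i)]
    have hBpsd : B.PosSemidef := by
      refine Matrix.PosSemidef.of_dotProduct_mulVec_nonneg hBH fun y => ?_
      rw [qf_dot]
      exact ih hF' y
    have hsplit : ∀ i j : Fin n,
        (∏ k ∈ insert a F, (1 + dist (s i) (s j) ^ 2 / (k:ℝ))⁻¹)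
          = (1 + dist (s i) (s j) ^ 2 / (a:ℝ))⁻¹ * B i j := fun i j =>
      Finset.prod_insert ha
    have key : ∑ i, ∑ j, x i * x j * ∏ k ∈ insert a F, (1 + dist (s i) (s j) ^ 2 / (k:ℝ))⁻¹
        = ∑ i, ∑ j, x i * x j * ((1 + dist (s i) (s j) ^ 2 / (a:ℝ))⁻¹ * B i j) := by
      refine Finset.sum_congr rfl fun i _ => Finset.sum_congr rfl fun j _ => by rw [hsplit]
    rw [key]
    exact schur_qf_nonneg B hBpsd _
      (fun y => inv_kernel_qf_nonneg s y (a:ℝ) (by exact_mod_cast ha0)) x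

lemma qf_spectral (A : Matrix (Fin n) (Fin n) ℝ) (hA : A.IsHermitian) (x : Fin n → ℝ) :
    ∑ i, ∑ j, x i * x j * A i j
      = ∑ k, hA.eigenvalues k *
          (∑ i, x i * (hA.eigenvectorUnitary : Matrix (Fin n) (Fin n) ℝ) i k) ^ 2 := by
  set V : Matrix (Fin n) (Fin n) ℝ := (hA.eigenvectorUnitary : Matrix (Fin n) (Fin n) ℝ)
  have e1 : ∀ i j : Fin n, x i * x j * A i j
      = ∑ k, hA.eigenvalues k * ((x i * V i k) * (x j * V j k)) := by
    intro i j
    rw [real_spectral_entry A hA i j, Finset.mul_sum]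
    exact Finset.sum_congr rfl fun k _ => by ring
  simp_rw [e1]
  rw [sum_rotate]
  refine Finset.sum_congr rfl fun k _ => ?_
  rw [sq, Finset.sum_mul_sum, Finset.mul_sum]
  exact Finset.sum_congr rfl fun i _ => (Finset.mul_sum _ _ _).symm

lemma qf_norm (A : Matrix (Fin n) (Fin n) ℝ) (hA : A.IsHermitian) (x : Fin n → ℝ) :
    ∑ k, (∑ i, x i * (hA.eigenvectorUnitary : Matrix (Fin n) (Fin n) ℝ) i k) ^ 2
      = ∑ i, x i ^ 2 := by
  set V : Matrix (Fin n) (Fin n) ℝ := (hA.eigenvectorUnitary : Matrix (Fin n) (Fin n) ℝ)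
  have e1 : ∀ k, (∑ i, x i * V i k) ^ 2 = ∑ i, ∑ j, (x i * V i k) * (x j * V j k) := by
    intro k
    rw [sq, Finset.sum_mul_sum]
  simp_rw [e1]
  rw [← sum_rotate (fun i j k => (x i * V i k) * (x j * V j k))]
  have e2 : ∀ i j : Fin n, ∑ k, (x i * V i k) * (x j * V j k)
      = x i * x j * (if i = j then (1:ℝ) else 0) := by
    intro i j
    have h := real_unitary_orth A hA i j
    calc ∑ k, (x i * V i k) * (x j * V j k) = x i * x j * ∑ k, V i k * V j k := by
          rw [Finset.mul_sum]
          exact Finset.sum_congr rfl fun k _ => by ring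
      _ = x i * x j * (if i = j then (1:ℝ) else 0) := by rw [h]
  simp_rw [e2]
  refine Finset.sum_congr rfl fun i _ => ?_
  rw [Finset.sum_eq_single i]
  · simp [sq]
  · intro b _ hb
    simp [if_neg (Ne.symm hb)]
  · intro h; exact absurd (Finset.mem_univ i) h

lemma qf_delta (x : Fin n → ℝ) (c : ℝ) (B : Matrix (Fin n) (Fin n) ℝ) :
    ∑ i, ∑ j, x i * x j * ((if i = j then c else 0) * B i j) = c * ∑ i, x i ^ 2 * B i i := by
  rw [Finset.mul_sum]
  refine Finset.sum_congr rfl fun i _ => ?_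
  rw [Finset.sum_eq_single i]
  · have h : (if i = i then c else 0) = c := if_pos rfl
    rw [h]; ring
  · intro b _ hb
    simp [if_neg (Ne.symm hb)]
  · intro h; exact absurd (Finset.mem_univ i) h

lemma qf_delta' (x : Fin n → ℝ) (c : ℝ) :
    ∑ i, ∑ j, x i * x j * (if i = j then c else 0) = c * ∑ i, x i ^ 2 := by
  rw [Finset.mul_sum]
  refine Finset.sum_congr rfl fun i _ => ?_
  rw [Finset.sum_eq_single i]
  · have h : (if i = i then c else 0) = c := if_pos rfl
    rw [h]; ring
  · intro b _ hb
    simp [if_neg (Ne.symm hb)]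
  · intro h; exact absurd (Finset.mem_univ i) h

lemma qf_sub (x : Fin n → ℝ) (f g : Fin n → Fin n → ℝ) :
    ∑ i, ∑ j, x i * x j * (f i j - g i j)
      = (∑ i, ∑ j, x i * x j * f i j) - ∑ i, ∑ j, x i * x j * g i j := by
  rw [← Finset.sum_sub_distrib]
  refine Finset.sum_congr rfl fun i _ => ?_
  rw [← Finset.sum_sub_distrib]
  exact Finset.sum_congr rfl fun j _ => by ring

lemma sandwich (hn : Nonempty (Fin n)) (A : Matrix (Fin n) (Fin n) ℝ) (hA : A.IsHermitian)
    (B : Matrix (Fin n) (Fin n) ℝ) (hB : B.PosSemidef) (hBdiag : ∀ i, B i i = 1)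
    (x : Fin n → ℝ) :
    (⨅ k, hA.eigenvalues k) * ∑ i, x i ^ 2 ≤ ∑ i, ∑ j, x i * x j * (A i j * B i j) ∧
    ∑ i, ∑ j, x i * x j * (A i j * B i j) ≤ (⨆ k, hA.eigenvalues k) * ∑ i, x i ^ 2 := by
  set lmin := ⨅ k, hA.eigenvalues k with hlmin
  set lmax := ⨆ k, hA.eigenvalues k with hlmax
  have hminle : ∀ k, lmin ≤ hA.eigenvalues k := fun k =>
    ciInf_le (Set.Finite.bddBelow (Set.finite_range _)) k
  have hlemax : ∀ k, hA.eigenvalues k ≤ lmax := fun k =>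
    le_ciSup (Set.Finite.bddAbove (Set.finite_range _)) k
  -- Rayleigh bounds for A
  have hup : ∀ y : Fin n → ℝ, ∑ i, ∑ j, y i * y j * A i j ≤ lmax * ∑ i, y i ^ 2 := by
    intro y
    rw [qf_spectral A hA y, ← qf_norm A hA y, Finset.mul_sum]
    exact Finset.sum_le_sum fun k _ =>
      mul_le_mul_of_nonneg_right (hlemax k) (sq_nonneg _)
  have hlo : ∀ y : Fin n → ℝ, lmin * ∑ i, y i ^ 2 ≤ ∑ i, ∑ j, y i * y j * A i j := by
    intro y
    rw [qf_spectral A hA y, ← qf_norm A hA y, Finset.mul_sum]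
    exact Finset.sum_le_sum fun k _ =>
      mul_le_mul_of_nonneg_right (hminle k) (sq_nonneg _)
  have hdiagsum : ∀ c : ℝ, c * ∑ i, x i ^ 2 * B i i = c * ∑ i, x i ^ 2 := by
    intro c
    congr 1
    exact Finset.sum_congr rfl fun i _ => by rw [hBdiag i, mul_one]
  constructor
  · -- lower bound: Schur with f = A - lmin δ
    have hschur := schur_qf_nonneg B hB (fun i j => A i j - (if i = j then lmin else 0))
      (fun y => by
        rw [show ∑ i, ∑ j, y i * y j * (A i j - (if i = j then lmin else 0)) = _ from
          qf_sub y (fun i j => A i j) (fun i j => if i = j then lmin else 0), qf_delta', sub_nonneg]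
        exact hlo y) x
    have hexp : ∑ i, ∑ j, x i * x j * ((A i j - (if i = j then lmin else 0)) * B i j)
        = (∑ i, ∑ j, x i * x j * (A i j * B i j)) - lmin * ∑ i, x i ^ 2 * B i i := by
      rw [← qf_delta x lmin B, ← qf_sub]
      refine Finset.sum_congr rfl fun i _ => Finset.sum_congr rfl fun j _ => by ring
    rw [hexp, hdiagsum, sub_nonneg] at hschur
    exact hschur
  · -- upper bound: Schur with f = lmax δ - A
    have hschur := schur_qf_nonneg B hB (fun i j => (if i = j then lmax else 0) - A i j)
      (fun y => by
        rw [show ∑ i, ∑ j, y i * y j * ((if i = j then lmax else 0) - A i j) = _ from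
          qf_sub y (fun i j => if i = j then lmax else 0) (fun i j => A i j), qf_delta', sub_nonneg]
        exact hup y) x
    have hexp : ∑ i, ∑ j, x i * x j * (((if i = j then lmax else 0) - A i j) * B i j)
        = lmax * (∑ i, x i ^ 2 * B i i) - ∑ i, ∑ j, x i * x j * (A i j * B i j) := by
      rw [← qf_delta x lmax B, ← qf_sub]
      refine Finset.sum_congr rfl fun i _ => Finset.sum_congr rfl fun j _ => by ring
    rw [hexp, hdiagsum, sub_nonneg] at hschur
    exact hschur

theorem sieve_cov_matrix_eigenvalue_bounds
    (d n m : ℕ) (hm : 1 ≤ m) (s : Fin n → EuclideanSpace ℝ (Fin d))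
    (w : ℕ → ℝ) (hw : ∀ k, 0 ≤ w k)
    (L U : ℝ) (hL : L ≤ ∑ k ∈ Finset.Icc 1 m, w k) (hU : ∑ k ∈ Finset.Icc 1 m, w k ≤ U)
    (C : ℝ → ℝ)
    (hC : ∀ h, C h = ∑ k ∈ Finset.Icc 1 m,
      w k * ∏ j ∈ Finset.Icc k m, (1 + h ^ 2 / (j : ℝ))⁻¹)
    (SC Amm : Matrix (Fin n) (Fin n) ℝ)
    (hSC : ∀ i j, SC i j = C (dist (s i) (s j)))
    (hAmm : ∀ i j, Amm i j = (1 + dist (s i) (s j) ^ 2 / (m : ℝ))⁻¹) :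
    ∀ (hS : SC.IsHermitian) (hA : Amm.IsHermitian), ∀ i : Fin n,
      L * (⨅ j, hA.eigenvalues j) ≤ hS.eigenvalues i ∧
      hS.eigenvalues i ≤ U * (⨆ j, hA.eigenvalues j) := by
  intro hS hA i
  have hn : Nonempty (Fin n) := ⟨i⟩
  have hm0 : (0:ℝ) < (m:ℝ) := by exact_mod_cast Nat.lt_of_lt_of_le Nat.zero_lt_one hm
  set v : Fin n → ℝ := ⇑(hS.eigenvectorBasis i) with hv
  have hev : hS.eigenvalues i = ∑ a, ∑ b, v a * v b * SC a b := by
    have h := hS.eigenvalues_eq i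
    rw [h, qf_dot SC v]
    simp
  have hnorm : ∑ a, v a ^ 2 = 1 := by
    have h1 : ‖hS.eigenvectorBasis i‖ = 1 := hS.eigenvectorBasis.orthonormal.1 i
    have h2 : ‖hS.eigenvectorBasis i‖ ^ 2 = 1 := by rw [h1]; norm_num
    rw [EuclideanSpace.norm_eq, Real.sq_sqrt
      (Finset.sum_nonneg fun a _ => sq_nonneg _)] at h2
    simpa [Real.norm_eq_abs, sq_abs] using h2
  set lmin := ⨅ q, hA.eigenvalues q with hlmin
  set lmax := ⨆ q, hA.eigenvalues q with hlmax
  have hApsd : Amm.PosSemidef := by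
    refine Matrix.PosSemidef.of_dotProduct_mulVec_nonneg hA fun y => ?_
    rw [qf_dot]
    have h := inv_kernel_qf_nonneg s y (m:ℝ) hm0
    have e : ∀ a b : Fin n, y a * y b * Amm a b
        = y a * y b * (1 + dist (s a) (s b) ^ 2 / (m:ℝ))⁻¹ := fun a b => by rw [hAmm]
    simp_rw [e]
    exact h
  have hmin0 : 0 ≤ lmin := le_ciInf fun k => hApsd.eigenvalues_nonneg k
  have hmax0 : 0 ≤ lmax := le_trans hmin0 <| le_trans
    (ciInf_le (Set.Finite.bddBelow (Set.finite_range _)) i)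
    (le_ciSup (Set.Finite.bddAbove (Set.finite_range _)) i)
  have hterm : ∀ k ∈ Finset.Icc 1 m,
      lmin ≤ (∑ a, ∑ b, v a * v b * ∏ q ∈ Finset.Icc k m,
          (1 + dist (s a) (s b) ^ 2 / (q:ℝ))⁻¹)
      ∧ (∑ a, ∑ b, v a * v b * ∏ q ∈ Finset.Icc k m,
          (1 + dist (s a) (s b) ^ 2 / (q:ℝ))⁻¹) ≤ lmax := by
    intro k hk
    obtain ⟨hk1, hkm⟩ := Finset.mem_Icc.mp hk
    set B : Matrix (Fin n) (Fin n) ℝ :=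
      Matrix.of (fun a b => ∏ q ∈ Finset.Icc k (m-1),
        (1 + dist (s a) (s b) ^ 2 / (q:ℝ))⁻¹) with hBdef
    have hBH : B.IsHermitian := Matrix.IsHermitian.ext fun a b => by
      simp only [hBdef, Matrix.of_apply, star_trivial, dist_comm (s b) (s a)]
    have hBpsd : B.PosSemidef := by
      refine Matrix.PosSemidef.of_dotProduct_mulVec_nonneg hBH fun y => ?_
      rw [qf_dot]
      exact prod_kernel_qf_nonneg s _
        (fun q hq => Nat.lt_of_lt_of_le (Nat.lt_of_lt_of_le Nat.zero_lt_one hk1)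
          (Finset.mem_Icc.mp hq).1) y
    have hBdiag : ∀ a, B a a = 1 := fun a => by
      simp [hBdef, dist_self]
    have hsplit : ∀ a b : Fin n,
        (∏ q ∈ Finset.Icc k m, (1 + dist (s a) (s b) ^ 2 / (q:ℝ))⁻¹)
          = Amm a b * B a b := by
      intro a b
      have hmem : m ∉ Finset.Icc k (m-1) := by
        simp only [Finset.mem_Icc]; omega
      have hIcc : Finset.Icc k m = insert m (Finset.Icc k (m-1)) := by
        ext q; simp only [Finset.mem_Icc, Finset.mem_insert]; omega
      rw [hIcc, Finset.prod_insert hmem, hAmm a b]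
      rfl
    have hs := sandwich ⟨i⟩ Amm hA B hBpsd hBdiag v
    have hrw : (∑ a, ∑ b, v a * v b * ∏ q ∈ Finset.Icc k m,
        (1 + dist (s a) (s b) ^ 2 / (q:ℝ))⁻¹)
        = ∑ a, ∑ b, v a * v b * (Amm a b * B a b) :=
      Finset.sum_congr rfl fun a _ => Finset.sum_congr rfl fun b _ => by rw [hsplit]
    rw [hrw]
    constructor
    · have := hs.1
      rwa [hnorm, mul_one] at this
    · have := hs.2
      rwa [hnorm, mul_one] at this
  have hq : ∑ a, ∑ b, v a * v b * SC a b
      = ∑ k ∈ Finset.Icc 1 m, w k * ∑ a, ∑ b, v a * v b *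
          ∏ q ∈ Finset.Icc k m, (1 + dist (s a) (s b) ^ 2 / (q:ℝ))⁻¹ := by
    have e : ∀ a b : Fin n, v a * v b * SC a b
        = ∑ k ∈ Finset.Icc 1 m, w k * (v a * v b *
            ∏ q ∈ Finset.Icc k m, (1 + dist (s a) (s b) ^ 2 / (q:ℝ))⁻¹) := by
      intro a b
      rw [hSC, hC, Finset.mul_sum]
      exact Finset.sum_congr rfl fun k _ => by ring
    simp_rw [e]
    calc ∑ a, ∑ b, ∑ k ∈ Finset.Icc 1 m, w k * (v a * v b *
          ∏ q ∈ Finset.Icc k m, (1 + dist (s a) (s b) ^ 2 / (q:ℝ))⁻¹)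
        = ∑ a, ∑ k ∈ Finset.Icc 1 m, ∑ b, w k * (v a * v b *
          ∏ q ∈ Finset.Icc k m, (1 + dist (s a) (s b) ^ 2 / (q:ℝ))⁻¹) :=
        Finset.sum_congr rfl fun a _ => Finset.sum_comm
      _ = ∑ k ∈ Finset.Icc 1 m, ∑ a, ∑ b, w k * (v a * v b *
          ∏ q ∈ Finset.Icc k m, (1 + dist (s a) (s b) ^ 2 / (q:ℝ))⁻¹) :=
        Finset.sum_comm
      _ = ∑ k ∈ Finset.Icc 1 m, w k * ∑ a, ∑ b, v a * v b *
          ∏ q ∈ Finset.Icc k m, (1 + dist (s a) (s b) ^ 2 / (q:ℝ))⁻¹ := by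
        refine Finset.sum_congr rfl fun k _ => ?_
        rw [Finset.mul_sum]
        exact Finset.sum_congr rfl fun a _ => by rw [Finset.mul_sum]
  constructor
  · rw [hev, hq]
    calc L * lmin ≤ (∑ k ∈ Finset.Icc 1 m, w k) * lmin :=
        mul_le_mul_of_nonneg_right hL hmin0
      _ = ∑ k ∈ Finset.Icc 1 m, w k * lmin := Finset.sum_mul _ _ _
      _ ≤ ∑ k ∈ Finset.Icc 1 m, w k * ∑ a, ∑ b, v a * v b *
          ∏ q ∈ Finset.Icc k m, (1 + dist (s a) (s b) ^ 2 / (q:ℝ))⁻¹ :=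
        Finset.sum_le_sum fun k hk =>
          mul_le_mul_of_nonneg_left (hterm k hk).1 (hw k)
  · rw [hev, hq]
    calc ∑ k ∈ Finset.Icc 1 m, w k * ∑ a, ∑ b, v a * v b *
          ∏ q ∈ Finset.Icc k m, (1 + dist (s a) (s b) ^ 2 / (q:ℝ))⁻¹
        ≤ ∑ k ∈ Finset.Icc 1 m, w k * lmax :=
        Finset.sum_le_sum fun k hk =>
          mul_le_mul_of_nonneg_left (hterm k hk).2 (hw k)
      _ = (∑ k ∈ Finset.Icc 1 m, w k) * lmax := (Finset.sum_mul _ _ _).symm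
      _ ≤ U * lmax := mul_le_mul_of_nonneg_right hU hmax0
end
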